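/- Let V be a finite set and let F be a real-valued function on the nonempty subsets of V that is non-increasing (∅ ≠ A ⊆ B implies F(A) ≥ F(B)) and supermodular (for nonempty A ⊆ B and j ∈ V, F(A) − F(A ∪ {j}) ≥ F(B) − F(B ∪ {j})). Extend F to the empty set by F(∅) = max{ F(X) + F(Y) − F(X ∪ Y) : X, Y nonempty, X ∩ Y = ∅ }, and assume F_max ≠ F_min. Then F(∅) ≥ F_max, and the normalized rank function ρ(A) = ρ̄(A) − ρ̄(∅) satisfies: ρ(∅) = 0; ρ(A) ≥ 0 for all A ⊆ V; ρ is non-decreasing (A ⊆ B implies ρ(A) ≤ ρ(B)); and ρ is submodular (for A ⊆ B and j ∉ B, ρ(A ∪ {j}) − ρ(A) ≥ ρ(B ∪ {j}) − ρ(B)). -/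

import Mathlib

/-- Let `F` be non-increasing and supermodular on nonempty subsets of a finite
set `V`, extended to `∅` by `F(∅) = max { F(X) + F(Y) - F(X ∪ Y) : X, Y nonempty, X ∩ Y = ∅ }`,
with `F_max = max_{a} F({a})`, `F_min = min { F(A) : ∅ ≠ A, |A| ≤ C }` and `F_max ≠ F_min`.
Then `F(∅) ≥ F_max`, and the normalized rank `ρ(A) = ρ̄(A) - ρ̄(∅)` (where
`ρ̄(A) = (F_max - F(A))/(F_max - F_min)`) satisfies `ρ(∅) = 0`, `ρ ≥ 0`, `ρ` is
non-decreasing, and `ρ` is submodular. -/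
theorem stmt6 {V : Type*} [Fintype V] [DecidableEq V]
    (F : Finset V → ℝ)
    (hmono : ∀ A B : Finset V, A.Nonempty → A ⊆ B → F B ≤ F A)
    (hsuper : ∀ A B : Finset V, A.Nonempty → A ⊆ B → ∀ j : V,
      F B - F (insert j B) ≤ F A - F (insert j A))
    (hFempty : IsGreatest {x : ℝ | ∃ X Y : Finset V, X.Nonempty ∧ Y.Nonempty ∧
      Disjoint X Y ∧ x = F X + F Y - F (X ∪ Y)} (F ∅))
    (C : ℕ) (hC0 : 0 < C) (hCN : C ≤ Fintype.card V)
    (Fmax Fmin : ℝ)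
    (hFmax : IsGreatest (Set.range fun a : V => F {a}) Fmax)
    (hFmin : IsLeast {x : ℝ | ∃ A : Finset V, A.Nonempty ∧ A.card ≤ C ∧ x = F A} Fmin)
    (hne : Fmax ≠ Fmin)
    (ρbar ρ : Finset V → ℝ)
    (hρbar : ∀ A, ρbar A = (Fmax - F A) / (Fmax - Fmin))
    (hρ : ∀ A, ρ A = ρbar A - ρbar ∅) :
    Fmax ≤ F ∅ ∧
      ρ ∅ = 0 ∧
      (∀ A : Finset V, 0 ≤ ρ A) ∧
      (∀ A B : Finset V, A ⊆ B → ρ A ≤ ρ B) ∧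
      (∀ A B : Finset V, A ⊆ B → ∀ j ∉ B,
        ρ (insert j B) - ρ B ≤ ρ (insert j A) - ρ A) := by
  -- denominator positive
  obtain ⟨A0, hA0ne, -, hA0⟩ := hFmin.1
  obtain ⟨a0, ha0⟩ := hA0ne
  have hle : Fmin ≤ Fmax := by
    calc Fmin = F A0 := hA0
    _ ≤ F {a0} := hmono {a0} A0 ⟨a0, Finset.mem_singleton_self a0⟩
        (Finset.singleton_subset_iff.mpr ha0)
    _ ≤ Fmax := hFmax.2 ⟨a0, rfl⟩
  have hd : 0 < Fmax - Fmin := by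
    rcases lt_or_eq_of_le hle with h | h
    · linarith
    · exact absurd h.symm hne
  -- F A ≤ Fmax for nonempty A
  have hub : ∀ A : Finset V, A.Nonempty → F A ≤ Fmax := by
    intro A ⟨a, ha⟩
    calc F A ≤ F {a} := hmono {a} A ⟨a, Finset.mem_singleton_self a⟩
          (Finset.singleton_subset_iff.mpr ha)
    _ ≤ Fmax := hFmax.2 ⟨a, rfl⟩
  -- Fmax ≤ F ∅
  have h1 : Fmax ≤ F ∅ := by
    obtain ⟨X, Y, hX, hY, hXY, -⟩ := hFempty.1
    obtain ⟨a, ha⟩ := hFmax.1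
    obtain ⟨x, hx⟩ := hX
    obtain ⟨y, hy⟩ := hY
    have hxy : x ≠ y := fun h => (Finset.disjoint_left.mp hXY hx) (h ▸ hy)
    obtain ⟨b, hb⟩ : ∃ b : V, b ≠ a := by
      by_cases h : x = a
      · exact ⟨y, fun hya => hxy (h.trans hya.symm)⟩
      · exact ⟨x, h⟩
    have hdisj : Disjoint ({a} : Finset V) {b} := by
      simpa [Finset.disjoint_singleton] using hb.symm
    have hmem := hFempty.2 ⟨{a}, {b}, ⟨a, Finset.mem_singleton_self a⟩,
      ⟨b, Finset.mem_singleton_self b⟩, hdisj, rfl⟩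
    have hsub : F (({a} : Finset V) ∪ {b}) ≤ F {b} := by
      exact hmono {b} ({a} ∪ {b}) ⟨b, Finset.mem_singleton_self b⟩
        (Finset.subset_union_right)
    calc Fmax = F {a} := ha.symm
    _ ≤ F {a} + F {b} - F ({a} ∪ {b}) := by linarith
    _ ≤ F ∅ := hmem
  -- F A ≤ F ∅ for all A
  have hub' : ∀ A : Finset V, F A ≤ F ∅ := by
    intro A
    rcases A.eq_empty_or_nonempty with rfl | hA
    · exact le_refl _
    · exact le_trans (hub A hA) h1
  -- ρ formula
  have hρ' : ∀ A, ρ A = (F ∅ - F A) / (Fmax - Fmin) := by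
    intro A
    rw [hρ, hρbar, hρbar]
    ring
  refine ⟨h1, ?_, ?_, ?_, ?_⟩
  · rw [hρ']; simp
  · intro A
    rw [hρ']
    exact div_nonneg (by linarith [hub' A]) hd.le
  · intro A B hAB
    rw [hρ', hρ']
    apply div_le_div_of_nonneg_right _ hd.le
    have : F B ≤ F A := by
      rcases A.eq_empty_or_nonempty with rfl | hA
      · exact hub' B
      · exact hmono A B hA hAB
    linarith
  · intro A B hAB j hj
    rw [hρ', hρ', hρ', hρ']
    rw [div_sub_div_same, div_sub_div_same]
    apply div_le_div_of_nonneg_right _ hd.le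
    have key : F B - F (insert j B) ≤ F A - F (insert j A) := by
      rcases A.eq_empty_or_nonempty with rfl | hA
      · rcases B.eq_empty_or_nonempty with rfl | hB
        · exact le_refl _
        · have hdisj : Disjoint B ({j} : Finset V) := by
            simp [Finset.disjoint_singleton_right, hj]
          have hmem := hFempty.2 ⟨B, {j}, hB, ⟨j, Finset.mem_singleton_self j⟩,
            hdisj, rfl⟩
          have : B ∪ {j} = insert j B := by
            ext x; simp [or_comm]
          rw [this] at hmem
          have hji : insert j (∅ : Finset V) = {j} := rfl
          rw [hji]
          linarith
      · exact hsuper A B hA hAB j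
    linarith
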